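/- Let P = C[x,y,z,w] with the Hermitian form making the monomials x^r y^s z^t w^u mutually orthogonal with squared norm r! s! t! u!. Define x* = (x+y+z+w)/2, y* = (x+y-z-w)/2, z* = (x-y+z-w)/2, w* = (x-y-z+w)/2. Then the monomials x*^r y*^s z*^t w*^u (r,s,t,u in N) are mutually orthogonal, with squared norm r! s! t! u!. -/

import Mathlib

open MvPolynomial

/-- The starred variables `x* , y*, z*, w*`. -/
noncomputable def starVar : Fin 4 → MvPolynomial (Fin 4) ℂ
  | 0 => C (1 / 2 : ℂ) * (X 0 + X 1 + X 2 + X 3)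
  | 1 => C (1 / 2 : ℂ) * (X 0 + X 1 - X 2 - X 3)
  | 2 => C (1 / 2 : ℂ) * (X 0 - X 1 + X 2 - X 3)
  | 3 => C (1 / 2 : ℂ) * (X 0 - X 1 - X 2 + X 3)

namespace StarAux

noncomputable def cf (i j : Fin 4) : ℂ :=
  if i.val = 0 ∨ j.val = 0 ∨ i.val = j.val then 1/2 else -(1/2)

lemma fv0 : ((0 : Fin 4) : ℕ) = 0 := rfl
lemma fv1 : ((1 : Fin 4) : ℕ) = 1 := rfl
lemma fv2 : ((2 : Fin 4) : ℕ) = 2 := rfl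
lemma fv3 : ((3 : Fin 4) : ℕ) = 3 := rfl

lemma cf_real (i j : Fin 4) : (starRingEnd ℂ) (cf i j) = cf i j := by
  unfold cf; split <;> simp [map_div₀, map_ofNat]

lemma starVar_eq (i : Fin 4) : starVar i = ∑ j, C (cf i j) * X j := by
  fin_cases i <;> simp [starVar, cf, Fin.sum_univ_four, Fin.ext_iff, fv0, fv1, fv2, fv3, -Fin.val_eq_zero_iff] <;> ring

/-- The adjoint derivations. -/
noncomputable def Dd (i : Fin 4) :
    Derivation ℂ (MvPolynomial (Fin 4) ℂ) (MvPolynomial (Fin 4) ℂ) :=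
  mkDerivation ℂ (fun j => C (cf i j))

lemma Dd_X (i j : Fin 4) : Dd i (X j) = C (cf i j) := mkDerivation_X _ _ _

lemma cf_orth (i k : Fin 4) : ∑ j, cf k j * cf i j = if i = k then 1 else 0 := by
  fin_cases i <;> fin_cases k <;>
    norm_num [Fin.sum_univ_four, cf, Fin.ext_iff, fv0, fv1, fv2, fv3, -Fin.val_eq_zero_iff]

lemma Dd_starVar (i k : Fin 4) :
    Dd i (starVar k) = if i = k then 1 else 0 := by
  have h : ∀ j, Dd i (C (cf k j) * X j) = C (cf k j * cf i j) := by
    intro j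
    rw [show C (cf k j) * X j = cf k j • X j from by rw [smul_eq_C_mul],
      (Dd i).map_smul, Dd_X, smul_eq_C_mul, ← map_mul]
  rw [starVar_eq, map_sum, Finset.sum_congr rfl (fun j _ => h j), ← map_sum, cf_orth]
  split <;> simp

lemma monomial_eq_prod (α : Fin 4 →₀ ℕ) :
    (monomial α (1:ℂ)) = X 0 ^ (α 0) * X 1 ^ (α 1) * X 2 ^ (α 2) * X 3 ^ (α 3) := by
  rw [← prod_X_pow_eq_monomial,
    show ∏ x ∈ α.support, (X x : MvPolynomial (Fin 4) ℂ) ^ α x = ∏ x : Fin 4, X x ^ α x from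
      Finset.prod_subset (Finset.subset_univ _) (fun x _ hx => by
        simp [Finsupp.notMem_support_iff.mp hx])]
  exact Fin.prod_univ_four _

lemma finsupp_eq_iff (α β : Fin 4 →₀ ℕ) :
    α = β ↔ α 0 = β 0 ∧ α 1 = β 1 ∧ α 2 = β 2 ∧ α 3 = β 3 := by
  constructor
  · rintro rfl; exact ⟨rfl, rfl, rfl, rfl⟩
  · rintro ⟨h0, h1, h2, h3⟩
    ext i; fin_cases i <;> assumption

section

variable (B : MvPolynomial (Fin 4) ℂ →ₗ[ℂ] MvPolynomial (Fin 4) ℂ →ₛₗ[starRingEnd ℂ] ℂ)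
    (hB : ∀ r s t u R S T U : ℕ,
      B (X 0 ^ r * X 1 ^ s * X 2 ^ t * X 3 ^ u)
        (X 0 ^ R * X 1 ^ S * X 2 ^ T * X 3 ^ U) =
      if r = R ∧ s = S ∧ t = T ∧ u = U then
        ((r.factorial * s.factorial * t.factorial * u.factorial : ℕ) : ℂ)
      else 0)

include hB in
lemma hB' (α β : Fin 4 →₀ ℕ) :
    B (monomial α 1) (monomial β 1) =
      if α = β then
        (((α 0).factorial * (α 1).factorial * (α 2).factorial * (α 3).factorial : ℕ) : ℂ)
      else 0 := by
  rw [monomial_eq_prod, monomial_eq_prod, hB]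
  simp only [← finsupp_eq_iff]

include hB in
lemma core (j : Fin 4) (α β : Fin 4 →₀ ℕ) :
    B (monomial (α + Finsupp.single j 1) 1) (monomial β 1)
      = (β j : ℂ) * B (monomial α 1) (monomial (β - Finsupp.single j 1) 1) := by
  rw [hB' B hB, hB' B hB]
  rcases Nat.eq_zero_or_pos (β j) with h | h
  · rw [if_neg, h, Nat.cast_zero, zero_mul]
    intro hc
    have := congrArg (fun f : Fin 4 →₀ ℕ => f j) hc
    simp [h] at this
  · have hle : Finsupp.single j 1 ≤ β := Finsupp.single_le_iff.2 h
    have hiff : α + Finsupp.single j 1 = β ↔ α = β - Finsupp.single j 1 := by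
      rw [eq_tsub_iff_add_eq_of_le hle]
    by_cases hc : α = β - Finsupp.single j 1
    · rw [if_pos (hiff.2 hc), if_pos hc]
      have hβ : β = α + Finsupp.single j 1 := (hiff.2 hc).symm
      subst hβ
      fin_cases j <;>
        simp [Finsupp.add_apply, Finsupp.single_apply, Nat.factorial_succ] <;>
        push_cast <;> ring
    · rw [if_neg (fun hh => hc (hiff.1 hh)), if_neg hc, mul_zero]

lemma mono_smul (s : Fin 4 →₀ ℕ) (c : ℂ) :
    (monomial s c : MvPolynomial (Fin 4) ℂ) = c • monomial s (1:ℂ) := by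
  rw [smul_monomial, smul_eq_mul, mul_one]

include hB in
lemma Bmono (s t : Fin 4 →₀ ℕ) (a b : ℂ) :
    B (monomial s a) (monomial t b)
      = a * (starRingEnd ℂ) b * B (monomial s 1) (monomial t 1) := by
  rw [mono_smul s a, mono_smul t b]
  simp only [map_smul, LinearMap.smul_apply, LinearMap.map_smulₛₗ, smul_eq_mul,
    RingHom.id_apply]
  ring

include hB in
lemma adj (i : Fin 4) (p q : MvPolynomial (Fin 4) ℂ) :
    B (starVar i * p) q = B p (Dd i q) := by
  induction p using MvPolynomial.induction_on' with
  | add p1 p2 ih1 ih2 =>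
      rw [mul_add, map_add, LinearMap.add_apply, ih1, ih2, map_add, LinearMap.add_apply]
  | monomial α a =>
    induction q using MvPolynomial.induction_on' with
    | add q1 q2 ih1 ih2 => simp only [map_add, ih1, ih2]
    | monomial β b =>
      have hL : starVar i * monomial α a
          = ∑ j, cf i j • monomial (α + Finsupp.single j 1) a := by
        rw [starVar_eq, Finset.sum_mul]
        refine Finset.sum_congr rfl fun j _ => ?_
        rw [mul_assoc, X, monomial_mul, one_mul, add_comm (Finsupp.single j 1) α, C_mul']
      have hR : Dd i (monomial β b)
          = b • ∑ j, (((β j : ℂ)) * cf i j) • monomial (β - Finsupp.single j 1) (1:ℂ) := by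
        rw [show Dd i = mkDerivation ℂ (fun j => C (cf i j)) from rfl, mkDerivation_monomial]
        congr 1
        rw [Finsupp.sum_fintype]
        · refine Finset.sum_congr rfl fun j _ => ?_
          rw [smul_eq_mul, C_apply, monomial_mul, add_zero, mono_smul]
        · intro j; simp
      rw [hL, hR, map_sum, LinearMap.sum_apply, LinearMap.map_smulₛₗ, map_sum,
        Finset.smul_sum]
      refine Finset.sum_congr rfl fun j _ => ?_
      simp only [map_smul, LinearMap.smul_apply, LinearMap.map_smulₛₗ, map_mul,
        map_natCast, cf_real, smul_eq_mul, RingHom.id_apply]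
      rw [Bmono B hB (α + Finsupp.single j 1) β a b,
        Bmono B hB α (β - Finsupp.single j 1) a 1, core B hB j α β,
        show (starRingEnd ℂ) 1 = 1 from map_one _]
      ring

lemma Dd_prod0 (R S T U : ℕ) :
    Dd 0 (starVar 0 ^ R * starVar 1 ^ S * starVar 2 ^ T * starVar 3 ^ U)
      = R • (starVar 0 ^ (R-1) * starVar 1 ^ S * starVar 2 ^ T * starVar 3 ^ U) := by
  have h0 : Dd 0 (starVar 0) = 1 := by rw [Dd_starVar]; simp
  have h1 : Dd 0 (starVar 1) = 0 := by rw [Dd_starVar]; simp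
  have h2 : Dd 0 (starVar 2) = 0 := by rw [Dd_starVar]; simp [Fin.ext_iff, fv0, fv1, fv2, fv3]
  have h3 : Dd 0 (starVar 3) = 0 := by rw [Dd_starVar]; simp [Fin.ext_iff, fv0, fv1, fv2, fv3]
  simp only [Derivation.leibniz, Derivation.leibniz_pow, h0, h1, h2, h3, smul_zero,
    mul_zero, zero_add, add_zero, smul_eq_mul, mul_one, nsmul_eq_mul, zero_mul]
  ring

lemma Dd_prod1 (R S T U : ℕ) :
    Dd 1 (starVar 0 ^ R * starVar 1 ^ S * starVar 2 ^ T * starVar 3 ^ U)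
      = S • (starVar 0 ^ R * starVar 1 ^ (S-1) * starVar 2 ^ T * starVar 3 ^ U) := by
  have h0 : Dd 1 (starVar 0) = 0 := by rw [Dd_starVar]; simp
  have h1 : Dd 1 (starVar 1) = 1 := by rw [Dd_starVar]; simp
  have h2 : Dd 1 (starVar 2) = 0 := by rw [Dd_starVar]; simp [Fin.ext_iff, fv0, fv1, fv2, fv3]
  have h3 : Dd 1 (starVar 3) = 0 := by rw [Dd_starVar]; simp [Fin.ext_iff, fv0, fv1, fv2, fv3]
  simp only [Derivation.leibniz, Derivation.leibniz_pow, h0, h1, h2, h3, smul_zero,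
    mul_zero, zero_add, add_zero, smul_eq_mul, mul_one, nsmul_eq_mul, zero_mul]
  ring

lemma Dd_prod2 (R S T U : ℕ) :
    Dd 2 (starVar 0 ^ R * starVar 1 ^ S * starVar 2 ^ T * starVar 3 ^ U)
      = T • (starVar 0 ^ R * starVar 1 ^ S * starVar 2 ^ (T-1) * starVar 3 ^ U) := by
  have h0 : Dd 2 (starVar 0) = 0 := by rw [Dd_starVar]; simp [Fin.ext_iff, fv0, fv1, fv2, fv3]
  have h1 : Dd 2 (starVar 1) = 0 := by rw [Dd_starVar]; simp [Fin.ext_iff, fv0, fv1, fv2, fv3]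
  have h2 : Dd 2 (starVar 2) = 1 := by rw [Dd_starVar]; simp
  have h3 : Dd 2 (starVar 3) = 0 := by rw [Dd_starVar]; simp [Fin.ext_iff, fv0, fv1, fv2, fv3]
  simp only [Derivation.leibniz, Derivation.leibniz_pow, h0, h1, h2, h3, smul_zero,
    mul_zero, zero_add, add_zero, smul_eq_mul, mul_one, nsmul_eq_mul, zero_mul]
  ring

lemma Dd_prod3 (R S T U : ℕ) :
    Dd 3 (starVar 0 ^ R * starVar 1 ^ S * starVar 2 ^ T * starVar 3 ^ U)
      = U • (starVar 0 ^ R * starVar 1 ^ S * starVar 2 ^ T * starVar 3 ^ (U-1)) := by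
  have h0 : Dd 3 (starVar 0) = 0 := by rw [Dd_starVar]; simp [Fin.ext_iff, fv0, fv1, fv2, fv3]
  have h1 : Dd 3 (starVar 1) = 0 := by rw [Dd_starVar]; simp [Fin.ext_iff, fv0, fv1, fv2, fv3]
  have h2 : Dd 3 (starVar 2) = 0 := by rw [Dd_starVar]; simp [Fin.ext_iff, fv0, fv1, fv2, fv3]
  have h3 : Dd 3 (starVar 3) = 1 := by rw [Dd_starVar]; simp
  simp only [Derivation.leibniz, Derivation.leibniz_pow, h0, h1, h2, h3, smul_zero,
    mul_zero, zero_add, add_zero, smul_eq_mul, mul_one, nsmul_eq_mul, zero_mul]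
  ring

lemma const_starVar (k : Fin 4) : constantCoeff (starVar k) = 0 := by
  fin_cases k <;> simp [starVar]

include hB in
lemma B_one (q : MvPolynomial (Fin 4) ℂ) :
    B 1 q = (starRingEnd ℂ) (constantCoeff q) := by
  induction q using MvPolynomial.induction_on' with
  | add q1 q2 ih1 ih2 => rw [map_add, ih1, ih2, map_add, map_add]
  | monomial β b =>
    rw [constantCoeff_monomial,
      show (1 : MvPolynomial (Fin 4) ℂ) = monomial 0 1 from by
        rw [monomial_zero', map_one],
      mono_smul β b, LinearMap.map_smulₛₗ, hB' B hB, smul_eq_mul]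
    by_cases h : β = (0 : Fin 4 →₀ ℕ)
    · subst h; simp
    · rw [if_neg (fun hh => h hh.symm), if_neg h, mul_zero, map_zero]

end

end StarAux

/-- With respect to the Hermitian form making the monomials in `x,y,z,w` mutually
orthogonal with squared norms `r!s!t!u!`, the monomials in `x*,y*,z*,w*` are also
mutually orthogonal with squared norms `r!s!t!u!`. -/
theorem star_monomials_orthogonal
    (B : MvPolynomial (Fin 4) ℂ →ₗ[ℂ] MvPolynomial (Fin 4) ℂ →ₛₗ[starRingEnd ℂ] ℂ)
    (hB : ∀ r s t u R S T U : ℕ,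
      B (X 0 ^ r * X 1 ^ s * X 2 ^ t * X 3 ^ u)
        (X 0 ^ R * X 1 ^ S * X 2 ^ T * X 3 ^ U) =
      if r = R ∧ s = S ∧ t = T ∧ u = U then
        ((r.factorial * s.factorial * t.factorial * u.factorial : ℕ) : ℂ)
      else 0) :
    ∀ r s t u R S T U : ℕ,
      B (starVar 0 ^ r * starVar 1 ^ s * starVar 2 ^ t * starVar 3 ^ u)
        (starVar 0 ^ R * starVar 1 ^ S * starVar 2 ^ T * starVar 3 ^ U) =
      if r = R ∧ s = S ∧ t = T ∧ u = U then
        ((r.factorial * s.factorial * t.factorial * u.factorial : ℕ) : ℂ)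
      else 0 := by
  intro r s t u R S T U
  induction r generalizing R with
  | succ r ih =>
    rw [show starVar 0 ^ (r+1) * starVar 1 ^ s * starVar 2 ^ t * starVar 3 ^ u
        = starVar 0 * (starVar 0 ^ r * starVar 1 ^ s * starVar 2 ^ t * starVar 3 ^ u) from by
        ring,
      StarAux.adj B hB, StarAux.Dd_prod0, map_nsmul]
    cases R with
    | zero => simp
    | succ R =>
      rw [Nat.succ_sub_one, ih R, nsmul_eq_mul]
      have hc : (r + 1 = R + 1 ∧ s = S ∧ t = T ∧ u = U) ↔ (r = R ∧ s = S ∧ t = T ∧ u = U) := by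
        omega
      rw [if_congr hc rfl rfl]
      split_ifs with h
      · obtain ⟨rfl, rfl, rfl, rfl⟩ := h
        push_cast [Nat.factorial_succ]
        ring
      · rw [mul_zero]
  | zero =>
    induction s generalizing S with
    | succ s ih =>
      rw [show starVar 0 ^ 0 * starVar 1 ^ (s+1) * starVar 2 ^ t * starVar 3 ^ u
          = starVar 1 * (starVar 0 ^ 0 * starVar 1 ^ s * starVar 2 ^ t * starVar 3 ^ u) from by
          ring,
        StarAux.adj B hB, StarAux.Dd_prod1, map_nsmul]
      cases S with
      | zero => simp
      | succ S =>
        rw [Nat.succ_sub_one, ih S, nsmul_eq_mul]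
        have hc : (0 = R ∧ s + 1 = S + 1 ∧ t = T ∧ u = U) ↔ (0 = R ∧ s = S ∧ t = T ∧ u = U) := by
          omega
        rw [if_congr hc rfl rfl]
        split_ifs with h
        · obtain ⟨rfl, rfl, rfl, rfl⟩ := h
          push_cast [Nat.factorial_succ]
          ring
        · rw [mul_zero]
    | zero =>
      induction t generalizing T with
      | succ t ih =>
        rw [show starVar 0 ^ 0 * starVar 1 ^ 0 * starVar 2 ^ (t+1) * starVar 3 ^ u
            = starVar 2 * (starVar 0 ^ 0 * starVar 1 ^ 0 * starVar 2 ^ t * starVar 3 ^ u) from by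
            ring,
          StarAux.adj B hB, StarAux.Dd_prod2, map_nsmul]
        cases T with
        | zero => simp
        | succ T =>
          rw [Nat.succ_sub_one, ih T, nsmul_eq_mul]
          have hc : (0 = R ∧ 0 = S ∧ t + 1 = T + 1 ∧ u = U) ↔ (0 = R ∧ 0 = S ∧ t = T ∧ u = U) := by
            omega
          rw [if_congr hc rfl rfl]
          split_ifs with h
          · obtain ⟨rfl, rfl, rfl, rfl⟩ := h
            push_cast [Nat.factorial_succ]
            ring
          · rw [mul_zero]
      | zero =>
        induction u generalizing U with
        | succ u ih =>
          rw [show starVar 0 ^ 0 * starVar 1 ^ 0 * starVar 2 ^ 0 * starVar 3 ^ (u+1)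
              = starVar 3 * (starVar 0 ^ 0 * starVar 1 ^ 0 * starVar 2 ^ 0 * starVar 3 ^ u) from by
              ring,
            StarAux.adj B hB, StarAux.Dd_prod3, map_nsmul]
          cases U with
          | zero => simp
          | succ U =>
            rw [Nat.succ_sub_one, ih U, nsmul_eq_mul]
            have hc : (0 = R ∧ 0 = S ∧ 0 = T ∧ u + 1 = U + 1) ↔ (0 = R ∧ 0 = S ∧ 0 = T ∧ u = U) := by
              omega
            rw [if_congr hc rfl rfl]
            split_ifs with h
            · obtain ⟨rfl, rfl, rfl, rfl⟩ := h
              push_cast [Nat.factorial_succ]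
              ring
            · rw [mul_zero]
        | zero =>
          rw [show starVar 0 ^ 0 * starVar 1 ^ 0 * starVar 2 ^ 0 * starVar 3 ^ 0
              = (1 : MvPolynomial (Fin 4) ℂ) from by ring,
            StarAux.B_one B hB]
          simp only [map_mul, map_pow, StarAux.const_starVar]
          rcases R with _ | R <;> rcases S with _ | S <;> rcases T with _ | T <;>
            rcases U with _ | U <;> simp [Nat.factorial]
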